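/- Let G be a finite cocomparability graph and let ⊑ be a partial order on the set C(G) of maximal cliques of G such that every two maximal cliques have a least upper bound A ∨ B and a greatest lower bound A ∧ B under ⊑, satisfying (i) for all maximal cliques A ⊑ B ⊑ C, A ∩ C ⊆ B, and (ii) for all maximal cliques A, B, A ∪ B ⊆ (A ∨ B) ∪ (A ∧ B). Then the following are equivalent: (1) there exists a partial order ≤_P on V(G) such that two distinct vertices are adjacent in G iff they are incomparable under ≤_P, and for all maximal cliques A, B of G, A ⊑ B holds iff for every a ∈ A there exists b ∈ B with a ≤_P b; (2) condition (iii) holds: for all maximal cliques A, B, A ∩ B ⊆ (A ∨ B) and A ∩ B ⊆ (A ∧ B). -/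

import Mathlib

/-- `G` is a cocomparability graph: there is a partial order on the vertices such
that two distinct vertices are adjacent iff they are incomparable. -/
def IsCocomparabilityGraph {V : Type*} (G : SimpleGraph V) : Prop :=
  ∃ le : V → V → Prop, IsPartialOrder V le ∧
    ∀ u v : V, u ≠ v → (G.Adj u v ↔ ¬ le u v ∧ ¬ le v u)

/-- A maximal clique of `G`: a clique not properly contained in any other clique. -/
def MaxCliq {V : Type*} (G : SimpleGraph V) (A : Set V) : Prop :=
  G.IsClique A ∧ ∀ B : Set V, G.IsClique B → A ⊆ B → A = B

section Stmt13Aux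

variable {V : Type*}

/-- Every clique extends to a maximal clique (finite vertex set). -/
lemma Stmt13.exists_maxCliq [Fintype V] {G : SimpleGraph V} {S : Set V}
    (hS : G.IsClique S) : ∃ M, MaxCliq G M ∧ S ⊆ M := by
  classical
  obtain ⟨M, hM, hmax⟩ := Set.Finite.exists_maximalFor (id : Set V → Set V)
    {B : Set V | G.IsClique B ∧ S ⊆ B} (Set.toFinite _) ⟨S, hS, subset_rfl⟩
  exact ⟨M, ⟨hM.1, fun B hB hMB => hMB.antisymm (hmax ⟨hB, hM.2.trans hMB⟩ hMB)⟩, hM.2⟩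

/-- If `v` is not in a maximal clique `A`, then `v` is non-adjacent to some vertex of `A`. -/
lemma Stmt13.maxCliq_nonmem {G : SimpleGraph V} {A : Set V} (hA : MaxCliq G A) {v : V}
    (hv : v ∉ A) : ∃ a ∈ A, v ≠ a ∧ ¬ G.Adj v a := by
  by_contra h
  push_neg at h
  have hcl : G.IsClique (insert v A) := hA.1.insert (fun b hb hbv => h b hb hbv)
  have := hA.2 (insert v A) hcl (Set.subset_insert _ _)
  exact hv (this ▸ Set.mem_insert v A)

/-- Dual description of the maximal-antichain order: if every element of `A` is below
some element of `B`, then every element of `B` is above some element of `A`. -/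
lemma Stmt13.dual_form {G : SimpleGraph V} (le : V → V → Prop)
    (hrefl : ∀ v, le v v) (htrans : ∀ a b c, le a b → le b c → le a c)
    (hanti : ∀ a b, le a b → le b a → a = b)
    (hadj : ∀ u v, u ≠ v → (G.Adj u v ↔ ¬ le u v ∧ ¬ le v u))
    {A B : Set V} (hA : MaxCliq G A) (hB : MaxCliq G B)
    (h : ∀ a ∈ A, ∃ b ∈ B, le a b) : ∀ b ∈ B, ∃ a ∈ A, le a b := by
  intro b hb
  by_cases hbA : b ∈ A
  · exact ⟨b, hbA, hrefl b⟩
  obtain ⟨a, haA, hne, hnadj⟩ := Stmt13.maxCliq_nonmem hA hbA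
  have hcomp : le b a ∨ le a b := by
    by_contra hc
    push_neg at hc
    exact hnadj ((hadj b a hne).mpr ⟨hc.1, hc.2⟩)
  rcases hcomp with hba | hab
  · obtain ⟨b', hb', hab'⟩ := h a haA
    have hbb' : le b b' := htrans _ _ _ hba hab'
    have hbeq : b = b' := by
      by_contra hne'
      exact ((hadj b b' hne').mp (hB.1 hb hb' hne')).1 hbb'
    subst hbeq
    exact absurd (hanti _ _ hab' hba).symm hne
  · exact ⟨a, haA, hab⟩

/-- Forward direction, join part: if the lattice order is realized by a vertex order,
then `A ∩ B ⊆ A ∨ B`. -/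
lemma Stmt13.forward_join [Fintype V] {G : SimpleGraph V} (le : V → V → Prop)
    (hrefl : ∀ v, le v v) (htrans : ∀ a b c, le a b → le b c → le a c)
    (hanti : ∀ a b, le a b → le b a → a = b)
    (hadj : ∀ u v, u ≠ v → (G.Adj u v ↔ ¬ le u v ∧ ¬ le v u))
    (r : Set V → Set V → Prop) (jn : Set V → Set V → Set V)
    (hjn : ∀ A B, MaxCliq G A → MaxCliq G B →
      MaxCliq G (jn A B) ∧ r A (jn A B) ∧ r B (jn A B) ∧
      (∀ C, MaxCliq G C → r A C → r B C → r (jn A B) C))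
    (hle3 : ∀ A B, MaxCliq G A → MaxCliq G B → (r A B ↔ ∀ a ∈ A, ∃ b ∈ B, le a b))
    {A B : Set V} (hA : MaxCliq G A) (hB : MaxCliq G B) :
    A ∩ B ⊆ jn A B := by
  classical
  intro x hx
  obtain ⟨hxA, hxB⟩ := hx
  by_contra hxJ
  -- the down-set of A ∪ B and its maximal elements
  set F : Set V := {v | ∃ c, (c ∈ A ∨ c ∈ B) ∧ le v c} with hF
  set MF : Set V := {m | m ∈ F ∧ ∀ f ∈ F, le m f → m = f} with hMF
  have hxMF : x ∈ MF := by
    refine ⟨⟨x, Or.inl hxA, hrefl x⟩, ?_⟩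
    rintro f ⟨c, hc, hfc⟩ hxf
    have hxc : le x c := htrans _ _ _ hxf hfc
    have hxceq : x = c := by
      rcases hc with hc | hc
      · by_contra hne
        exact ((hadj x c hne).mp (hA.1 hxA hc hne)).1 hxc
      · by_contra hne
        exact ((hadj x c hne).mp (hB.1 hxB hc hne)).1 hxc
    subst hxceq
    exact hanti _ _ hxf hfc
  have hMFcl : G.IsClique MF := by
    intro m hm m' hm' hne
    exact (hadj m m' hne).mpr
      ⟨fun h => hne (hm.2 m' hm'.1 h), fun h => hne.symm (hm'.2 m hm.1 h)⟩
  obtain ⟨E, hE, hMFE⟩ := Stmt13.exists_maxCliq hMFcl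
  -- every element of F is below some maximal element of F, which lies in E
  have hub : ∀ c ∈ F, ∃ e ∈ E, le c e := by
    intro c hc
    letI : PartialOrder V :=
      { le := le, le_refl := hrefl, le_trans := htrans, le_antisymm := hanti }
    obtain ⟨m, hm, hmax⟩ := Set.Finite.exists_maximalFor (id : V → V)
      {f ∈ F | le c f} (Set.toFinite _) ⟨c, hc, hrefl c⟩
    exact ⟨m, hMFE ⟨hm.1, fun f hf hmf => hanti _ _ hmf (hmax ⟨hf, htrans _ _ _ hm.2 hmf⟩ hmf)⟩, hm.2⟩
  obtain ⟨hJ, hAJ, hBJ, hlub⟩ := hjn A B hA hB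
  have hrAE : r A E := (hle3 A E hA hE).mpr (fun a ha => hub a ⟨a, Or.inl ha, hrefl a⟩)
  have hrBE : r B E := (hle3 B E hB hE).mpr (fun b hb => hub b ⟨b, Or.inr hb, hrefl b⟩)
  have hJEle := (hle3 _ E hJ hE).mp (hlub E hE hrAE hrBE)
  have hAJle := (hle3 A _ hA hJ).mp hAJ
  -- x is not in jn A B, so it is comparable to some element of jn A B
  obtain ⟨y, hyJ, hne, hnadj⟩ := Stmt13.maxCliq_nonmem hJ hxJ
  have hcomp : le x y ∨ le y x := by
    by_contra hc
    push_neg at hc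
    exact hnadj ((hadj x y hne).mpr ⟨hc.1, hc.2⟩)
  rcases hcomp with hxy | hyx
  · obtain ⟨e, heE, hye⟩ := hJEle y hyJ
    have hxe : le x e := htrans _ _ _ hxy hye
    have hxeq : x = e := by
      by_contra hne'
      exact ((hadj x e hne').mp (hE.1 (hMFE hxMF) heE hne')).1 hxe
    subst hxeq
    exact hne (hanti _ _ hxy hye)
  · obtain ⟨j, hjJ, hxj⟩ := hAJle x hxA
    have hyj : le y j := htrans _ _ _ hyx hxj
    have hyeq : y = j := by
      by_contra hne'
      exact ((hadj y j hne').mp (hJ.1 hyJ hjJ hne')).1 hyj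
    subst hyeq
    exact hne.symm (hanti _ _ hyx hxj)

/-- Key lemma L1: if `u ∈ A`, `v ∈ M ∩ J` and `A, M ⊑ J`, with `u, v` distinct
non-adjacent, then `u ∈ A ∧ M`. -/
lemma Stmt13.lemL1 {G : SimpleGraph V} {r : Set V → Set V → Prop}
    {jn mt : Set V → Set V → Set V}
    (hjn : ∀ A B, MaxCliq G A → MaxCliq G B →
      MaxCliq G (jn A B) ∧ r A (jn A B) ∧ r B (jn A B) ∧
      (∀ C, MaxCliq G C → r A C → r B C → r (jn A B) C))
    (hi : ∀ A B C, MaxCliq G A → MaxCliq G B → MaxCliq G C → r A B → r B C → A ∩ C ⊆ B)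
    (hii : ∀ A B, MaxCliq G A → MaxCliq G B → A ∪ B ⊆ jn A B ∪ mt A B)
    {A M J : Set V} (hA : MaxCliq G A) (hM : MaxCliq G M) (hJ : MaxCliq G J)
    (hAJ : r A J) (hMJ : r M J) {u v : V} (hu : u ∈ A) (hv : v ∈ M) (hvJ : v ∈ J)
    (hne : u ≠ v) (hnadj : ¬ G.Adj u v) : u ∈ mt A M := by
  obtain ⟨hjnAM, h1, h2, hlub⟩ := hjn A M hA hM
  have hvjn : v ∈ jn A M := hi M (jn A M) J hM hjnAM hJ h2 (hlub J hJ hAJ hMJ) ⟨hv, hvJ⟩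
  rcases hii A M hA hM (Or.inl hu) with h | h
  · exact absurd (hjnAM.1 h hvjn hne) hnadj
  · exact h

/-- Key lemma L2 (dual of L1). -/
lemma Stmt13.lemL2 {G : SimpleGraph V} {r : Set V → Set V → Prop}
    {jn mt : Set V → Set V → Set V}
    (hmt : ∀ A B, MaxCliq G A → MaxCliq G B →
      MaxCliq G (mt A B) ∧ r (mt A B) A ∧ r (mt A B) B ∧
      (∀ C, MaxCliq G C → r C A → r C B → r C (mt A B)))
    (hi : ∀ A B C, MaxCliq G A → MaxCliq G B → MaxCliq G C → r A B → r B C → A ∩ C ⊆ B)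
    (hii : ∀ A B, MaxCliq G A → MaxCliq G B → A ∪ B ⊆ jn A B ∪ mt A B)
    {D M N : Set V} (hD : MaxCliq G D) (hM : MaxCliq G M) (hN : MaxCliq G N)
    (hND : r N D) (hNM : r N M) {v w : V} (hw : w ∈ D) (hv : v ∈ M) (hvN : v ∈ N)
    (hne : v ≠ w) (hnadj : ¬ G.Adj v w) : w ∈ jn D M := by
  obtain ⟨hmtDM, h1, h2, hglb⟩ := hmt D M hD hM
  have hvmt : v ∈ mt D M := hi N (mt D M) M hN hmtDM hM (hglb N hN hND hNM) h2 ⟨hvN, hv⟩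
  rcases hii D M hD hM (Or.inl hw) with h | h
  · exact h
  · exact absurd (hmtDM.1 hvmt h hne) hnadj

end Stmt13Aux

/-- For a lattice structure on the maximal cliques of a cocomparability graph `G`
satisfying conditions (i) and (ii): it arises as the maximal antichain lattice of
some transitive orientation of the complement of `G` iff condition (iii) holds. -/
theorem stmt13 {V : Type*} [Fintype V] (G : SimpleGraph V)
    (hG : IsCocomparabilityGraph G)
    (r : Set V → Set V → Prop) (jn mt : Set V → Set V → Set V)
    (hrefl : ∀ A, MaxCliq G A → r A A)
    (hantisymm : ∀ A B, MaxCliq G A → MaxCliq G B → r A B → r B A → A = B)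
    (htrans : ∀ A B C, MaxCliq G A → MaxCliq G B → MaxCliq G C → r A B → r B C → r A C)
    (hjn : ∀ A B, MaxCliq G A → MaxCliq G B →
      MaxCliq G (jn A B) ∧ r A (jn A B) ∧ r B (jn A B) ∧
      (∀ C, MaxCliq G C → r A C → r B C → r (jn A B) C))
    (hmt : ∀ A B, MaxCliq G A → MaxCliq G B →
      MaxCliq G (mt A B) ∧ r (mt A B) A ∧ r (mt A B) B ∧
      (∀ C, MaxCliq G C → r C A → r C B → r C (mt A B)))
    (hi : ∀ A B C, MaxCliq G A → MaxCliq G B → MaxCliq G C → r A B → r B C → A ∩ C ⊆ B)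
    (hii : ∀ A B, MaxCliq G A → MaxCliq G B → A ∪ B ⊆ jn A B ∪ mt A B) :
    (∃ le : V → V → Prop, IsPartialOrder V le ∧
      (∀ u v : V, u ≠ v → (G.Adj u v ↔ ¬ le u v ∧ ¬ le v u)) ∧
      (∀ A B, MaxCliq G A → MaxCliq G B → (r A B ↔ ∀ a ∈ A, ∃ b ∈ B, le a b))) ↔
    (∀ A B, MaxCliq G A → MaxCliq G B → A ∩ B ⊆ jn A B ∧ A ∩ B ⊆ mt A B) := by
  classical
  constructor
  · -- the lattice is realized by a vertex order ⟹ condition (iii)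
    rintro ⟨le, hpo, hadj, hle3⟩ A B hA hB
    have hlrefl : ∀ v, le v v := hpo.toIsPreorder.toRefl.refl
    have hltrans : ∀ a b c, le a b → le b c → le a c :=
      fun a b c => hpo.toIsPreorder.toIsTrans.trans a b c
    have hlanti : ∀ a b, le a b → le b a → a = b :=
      fun a b => hpo.toAntisymm.antisymm a b
    have hadj' : ∀ u v : V, u ≠ v → (G.Adj u v ↔ ¬ le v u ∧ ¬ le u v) :=
      fun u v h => (hadj u v h).trans and_comm
    refine ⟨Stmt13.forward_join le hlrefl hltrans hlanti hadj r jn hjn hle3 hA hB, ?_⟩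
    -- the meet part follows by flipping the orders
    have hle3' : ∀ A B, MaxCliq G A → MaxCliq G B →
        ((flip r) A B ↔ ∀ a ∈ A, ∃ b ∈ B, (flip le) a b) := by
      intro A B hA hB
      have := hle3 B A hB hA
      constructor
      · intro h a ha
        exact Stmt13.dual_form le hlrefl hltrans hlanti hadj hB hA (this.mp h) a ha
      · intro h
        exact this.mpr (Stmt13.dual_form (flip le) (fun v => hlrefl v)
          (fun a b c h1 h2 => hltrans c b a h2 h1) (fun a b h1 h2 => hlanti a b h2 h1)
          hadj' hA hB h)
    exact Stmt13.forward_join (flip le) (fun v => hlrefl v)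
      (fun a b c h1 h2 => hltrans c b a h2 h1) (fun a b h1 h2 => hlanti a b h2 h1)
      hadj' (flip r) mt
      (fun A B hA hB => ⟨(hmt A B hA hB).1, (hmt A B hA hB).2.1, (hmt A B hA hB).2.2.1,
        fun C hC h1 h2 => (hmt A B hA hB).2.2.2 C hC h1 h2⟩)
      hle3' hA hB
  · -- condition (iii) ⟹ the lattice is realized by a vertex order
    intro hiii
    set le : V → V → Prop := fun u v => u = v ∨
      (¬ G.Adj u v ∧ ∃ A B, MaxCliq G A ∧ MaxCliq G B ∧ u ∈ A ∧ v ∈ B ∧ r A B) with hle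
    -- F2: no 2-cycles
    have F2 : ∀ (u v : V) (A B A' B' : Set V), u ≠ v → ¬ G.Adj u v →
        MaxCliq G A → MaxCliq G B → MaxCliq G A' → MaxCliq G B' →
        u ∈ A → v ∈ B → r A B → v ∈ A' → u ∈ B' → r A' B' → False := by
      intro u v A B A' B' hne hnadj hA hB hA' hB' huA hvB hrAB hvA' huB' hrA'B'
      obtain ⟨hJ, hBJ, hB'J, _⟩ := hjn B B' hB hB'
      rcases hii B B' hB hB' (Or.inr huB') with huJ | huM
      · have : u ∈ B := hi A B (jn B B') hA hB hJ hrAB hBJ ⟨huA, huJ⟩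
        exact hnadj (hB.1 this hvB hne)
      · rcases hii B B' hB hB' (Or.inl hvB) with hvJ | hvM
        · have : v ∈ B' := hi A' B' (jn B B') hA' hB' hJ hrA'B' hB'J ⟨hvA', hvJ⟩
          exact hnadj (hB'.1 huB' this hne)
        · exact hnadj ((hmt B B' hB hB').1.1 huM hvM hne)
    -- F1: comparability of non-adjacent pairs
    have F1 : ∀ (u v : V) (A B : Set V), u ≠ v → ¬ G.Adj u v →
        MaxCliq G A → MaxCliq G B → u ∈ A → v ∈ B → le u v ∨ le v u := by
      intro u v A B hne hnadj hA hB hu hv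
      obtain ⟨hJ, hAJ, hBJ, _⟩ := hjn A B hA hB
      obtain ⟨hM, hMA, hMB, _⟩ := hmt A B hA hB
      have hrMJ : r (mt A B) (jn A B) := htrans _ A _ hM hA hJ hMA hAJ
      rcases hii A B hA hB (Or.inl hu) with huJ | huM
      · rcases hii A B hA hB (Or.inr hv) with hvJ | hvM
        · exact absurd (hJ.1 huJ hvJ hne) hnadj
        · exact Or.inr (Or.inr ⟨fun h => hnadj h.symm,
            mt A B, jn A B, hM, hJ, hvM, huJ, hrMJ⟩)
      · rcases hii A B hA hB (Or.inr hv) with hvJ | hvM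
        · exact Or.inl (Or.inr ⟨hnadj, mt A B, jn A B, hM, hJ, huM, hvJ, hrMJ⟩)
        · exact absurd (hM.1 huM hvM hne) hnadj
    -- W: from u "below" v, and any maximal clique C ∋ v, we get u ∈ A₀ ∧ C
    have W : ∀ (u v : V) (A₀ B₀ C : Set V), u ≠ v → ¬ G.Adj u v →
        MaxCliq G A₀ → MaxCliq G B₀ → MaxCliq G C →
        u ∈ A₀ → v ∈ B₀ → r A₀ B₀ → v ∈ C → u ∈ mt A₀ C := by
      intro u v A₀ B₀ C hne hnadj hA₀ hB₀ hC hu hv hr hvC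
      obtain ⟨hJ, hB₀J, hCJ, _⟩ := hjn B₀ C hB₀ hC
      exact Stmt13.lemL1 hjn hi hii hA₀ hC hJ (htrans _ B₀ _ hA₀ hB₀ hJ hr hB₀J) hCJ
        hu hvC ((hiii B₀ C hB₀ hC).1 ⟨hv, hvC⟩) hne hnadj
    -- W': from u "below" v, and any maximal clique C ∋ u, we get v ∈ B₀ ∨ C
    have W' : ∀ (u v : V) (A₀ B₀ C : Set V), u ≠ v → ¬ G.Adj u v →
        MaxCliq G A₀ → MaxCliq G B₀ → MaxCliq G C →
        u ∈ A₀ → v ∈ B₀ → r A₀ B₀ → u ∈ C → v ∈ jn B₀ C := by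
      intro u v A₀ B₀ C hne hnadj hA₀ hB₀ hC hu hv hr huC
      obtain ⟨hN, hNA₀, hNC, _⟩ := hmt A₀ C hA₀ hC
      exact Stmt13.lemL2 hmt hi hii hB₀ hC hN (htrans _ A₀ _ hN hA₀ hB₀ hNA₀ hr) hNC
        hv huC ((hiii A₀ C hA₀ hC).2 ⟨hu, huC⟩) hne hnadj
    -- W'': from a "below" b with a ∈ A, b ∈ B, we get a ∈ A ∧ B
    have W'' : ∀ (a b : V) (A B A₀ B₀ : Set V), a ≠ b → ¬ G.Adj a b →
        MaxCliq G A → MaxCliq G B → MaxCliq G A₀ → MaxCliq G B₀ →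
        a ∈ A → b ∈ B → a ∈ A₀ → b ∈ B₀ → r A₀ B₀ → a ∈ mt A B := by
      intro a b A B A₀ B₀ hne hnadj hA hB hA₀ hB₀ ha hb ha0 hb0 hr0
      have hbQ : b ∈ jn B₀ A := W' a b A₀ B₀ A hne hnadj hA₀ hB₀ hA ha0 hb0 hr0 ha
      obtain ⟨hQ, hB₀Q, hAQ, _⟩ := hjn B₀ A hB₀ hA
      obtain ⟨hJ, hQJ, hBJ, _⟩ := hjn (jn B₀ A) B hQ hB
      exact Stmt13.lemL1 hjn hi hii hA hB hJ (htrans _ (jn B₀ A) _ hA hQ hJ hAQ hQJ) hBJ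
        ha hb ((hiii (jn B₀ A) B hQ hB).1 ⟨hbQ, hb⟩) hne hnadj
    -- reflexivity
    have hle_refl : ∀ v, le v v := fun v => Or.inl rfl
    -- antisymmetry
    have hle_anti : ∀ u v, le u v → le v u → u = v := by
      intro u v h1 h2
      by_contra hne
      rcases h1 with rfl | ⟨hnadj, A, B, hA, hB, hu, hv, hr⟩
      · exact hne rfl
      rcases h2 with heq | ⟨hnadj', A', B', hA', hB', hv', hu', hr'⟩
      · exact hne heq.symm
      exact F2 u v A B A' B' hne hnadj hA hB hA' hB' hu hv hr hv' hu' hr'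
    -- transitivity
    have hle_trans : ∀ u v w, le u v → le v w → le u w := by
      intro u v w h1 h2
      rcases h1 with rfl | ⟨hnadj1, A₀, B₀, hA₀, hB₀, hu0, hv0, hr0⟩
      · exact h2
      rcases h2 with rfl | ⟨hnadj2, A₁, B₁, hA₁, hB₁, hv1, hw1, hr1⟩
      · exact Or.inr ⟨hnadj1, A₀, B₀, hA₀, hB₀, hu0, hv0, hr0⟩
      by_cases huw : u = w
      · exact Or.inl huw
      by_cases huv : u = v
      · exact huv ▸ Or.inr ⟨hnadj2, A₁, B₁, hA₁, hB₁, hv1, hw1, hr1⟩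
      by_cases hvw : v = w
      · exact Or.inr ⟨hvw ▸ hnadj1, A₀, B₀, hA₀, hB₀, hu0, hvw ▸ hv0, hr0⟩
      have huN : u ∈ mt A₀ A₁ := W u v A₀ B₀ A₁ huv hnadj1 hA₀ hB₀ hA₁ hu0 hv0 hr0 hv1
      obtain ⟨hN, hNA₀, hNA₁, _⟩ := hmt A₀ A₁ hA₀ hA₁
      have hrNB₁ : r (mt A₀ A₁) B₁ := htrans _ A₁ _ hN hA₁ hB₁ hNA₁ hr1
      have hnadj3 : ¬ G.Adj u w := by
        intro hadjuw
        obtain ⟨E, hE, hEsub⟩ := Stmt13.exists_maxCliq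
          (SimpleGraph.isClique_pair.mpr (fun _ => hadjuw))
        have huE : u ∈ E := hEsub (Set.mem_insert _ _)
        have hwE : w ∈ E := hEsub (Set.mem_insert_of_mem _ rfl)
        have hvX : v ∈ mt A₁ E := W v w A₁ B₁ E hvw hnadj2 hA₁ hB₁ hE hv1 hw1 hr1 hwE
        have hvY : v ∈ jn B₀ E := W' u v A₀ B₀ E huv hnadj1 hA₀ hB₀ hE hu0 hv0 hr0 huE
        obtain ⟨hX, hXA₁, hXE, _⟩ := hmt A₁ E hA₁ hE
        obtain ⟨hY, hB₀Y, hEY, _⟩ := hjn B₀ E hB₀ hE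
        have hvE : v ∈ E := hi (mt A₁ E) E (jn B₀ E) hX hE hY hXE hEY ⟨hvX, hvY⟩
        exact hnadj1 (hE.1 huE hvE huv)
      exact Or.inr ⟨hnadj3, mt A₀ A₁, B₁, hN, hB₁, huN, hw1, hrNB₁⟩
    refine ⟨le, { refl := hle_refl, trans := hle_trans, antisymm := hle_anti }, ?_, ?_⟩
    · -- adjacency iff incomparability
      intro u v hne
      constructor
      · intro ha
        constructor
        · rintro (rfl | ⟨hnadj, -⟩)
          · exact hne rfl
          · exact hnadj ha
        · rintro (rfl | ⟨hnadj, -⟩)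
          · exact hne rfl
          · exact hnadj ha.symm
      · rintro ⟨h1, h2⟩
        by_contra hna
        obtain ⟨A, hA, huA⟩ := Stmt13.exists_maxCliq (G.isClique_singleton u)
        obtain ⟨B, hB, hvB⟩ := Stmt13.exists_maxCliq (G.isClique_singleton v)
        rcases F1 u v A B hne hna hA hB (huA rfl) (hvB rfl) with h | h
        · exact h1 h
        · exact h2 h
    · -- r is the maximal antichain order of le
      intro A B hA hB
      constructor
      · intro hr a ha
        by_cases hb : a ∈ B
        · exact ⟨a, hb, Or.inl rfl⟩
        obtain ⟨b, hbB, hne, hnadj⟩ := Stmt13.maxCliq_nonmem hB hb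
        rcases F1 a b A B hne hnadj hA hB ha hbB with h | h
        · exact ⟨b, hbB, h⟩
        · exfalso
          rcases h with heq | ⟨hnadj', A', B', hA', hB', hbA', haB', hr'⟩
          · exact hne heq.symm
          · exact F2 a b A B A' B' hne hnadj hA hB hA' hB' ha hbB hr hbA' haB' hr'
      · intro h
        have hsub : A ⊆ mt A B := by
          intro a ha
          obtain ⟨b, hb, hab⟩ := h a ha
          by_cases heq : a = b
          · exact (hiii A B hA hB).2 ⟨ha, heq ▸ hb⟩
          rcases hab with heq' | ⟨hnadj, A₀, B₀, hA₀, hB₀, ha0, hb0, hr0⟩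
          · exact absurd heq' heq
          · exact W'' a b A B A₀ B₀ heq hnadj hA hB hA₀ hB₀ ha hb ha0 hb0 hr0
        have hAeq : A = mt A B := hA.2 _ (hmt A B hA hB).1.1 hsub
        rw [hAeq]
        exact (hmt A B hA hB).2.2.1
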